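/- Let ψ_{k−1}, ψ_k, ψ_{k+1} ∈ ℝ, Δy > 0, Θ ∈ [1,2], and let s = minmod(Θ(ψ_{k+1}−ψ_k)/Δy, (ψ_{k+1}−ψ_{k−1})/(2Δy), Θ(ψ_k−ψ_{k−1})/Δy). If ψ_{k−1} ≤ ψ_k ≤ ψ_{k+1} (monotone data), then the reconstructed interface values ψ⁻ = ψ_k + (Δy/2)s and ψ⁺ = ψ_k − (Δy/2)s satisfy ψ_{k−1} ≤ ψ⁺ ≤ ψ_k ≤ ψ⁻ ≤ ψ_{k+1}. -/

import Mathlib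

noncomputable def minmod3 (c1 c2 c3 : ℝ) : ℝ :=
  if 0 < c1 ∧ 0 < c2 ∧ 0 < c3 then min c1 (min c2 c3)
  else if c1 < 0 ∧ c2 < 0 ∧ c3 < 0 then max c1 (max c2 c3)
  else 0

theorem stmt5 (ψm ψk ψp Δy Θ : ℝ) (hΔ : 0 < Δy) (hΘ1 : 1 ≤ Θ) (hΘ2 : Θ ≤ 2)
    (hmono1 : ψm ≤ ψk) (hmono2 : ψk ≤ ψp) :
    let s := minmod3 (Θ * (ψp - ψk) / Δy) ((ψp - ψm) / (2 * Δy)) (Θ * (ψk - ψm) / Δy)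
    let ψminus := ψk + Δy / 2 * s
    let ψplus := ψk - Δy / 2 * s
    ψm ≤ ψplus ∧ ψplus ≤ ψk ∧ ψk ≤ ψminus ∧ ψminus ≤ ψp := by
  intro s ψminus ψplus
  set c1 := Θ * (ψp - ψk) / Δy with hc1
  set c2 := (ψp - ψm) / (2 * Δy) with hc2
  set c3 := Θ * (ψk - ψm) / Δy with hc3
  have hΘ0 : 0 < Θ := lt_of_lt_of_le one_pos hΘ1
  have hc1nn : 0 ≤ c1 := div_nonneg (mul_nonneg hΘ0.le (by linarith)) hΔ.le
  have hc3nn : 0 ≤ c3 := div_nonneg (mul_nonneg hΘ0.le (by linarith)) hΔ.le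
  have hkey : 0 ≤ s ∧ s ≤ c1 ∧ s ≤ c3 := by
    unfold s
    unfold minmod3
    split_ifs with h1 h2
    · refine ⟨le_min (le_of_lt h1.1) (le_min (le_of_lt h1.2.1) (le_of_lt h1.2.2)), ?_, ?_⟩
      · exact min_le_left _ _
      · exact le_trans (min_le_right _ _) (min_le_right _ _)
    · exact absurd h2.1 (not_lt.mpr hc1nn)
    · exact ⟨le_refl 0, hc1nn, hc3nn⟩
  obtain ⟨hs0, hs1, hs3⟩ := hkey
  have h1 : Δy / 2 * s ≤ Δy / 2 * c1 := by nlinarith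
  have h3 : Δy / 2 * s ≤ Δy / 2 * c3 := by nlinarith
  have e1 : Δy / 2 * c1 = Θ / 2 * (ψp - ψk) := by rw [hc1]; field_simp
  have e3 : Δy / 2 * c3 = Θ / 2 * (ψk - ψm) := by rw [hc3]; field_simp
  refine ⟨?_, ?_, ?_, ?_⟩ <;> simp only [ψplus, ψminus] <;> nlinarith [h1, h3, e1, e3, hs0, hΔ.le]
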